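/- Assume the split type: n odd with ε = −1, or n even with ε = +1. Let M be an ε-representation of the equioriented type A_n quiver with underlying graded space (M^0, ⟨−,−⟩), and let N ⊆ M be a subrepresentation (a family of subspaces N_i ⊆ M_i with f^M_i(N_i) ⊆ N_{i+1} for all 1 ≤ i ≤ n−1) which, regarded as a representation of the equioriented type A_n quiver, is indecomposable, i.e. N is nonzero and is not isomorphic to a direct sum of two nonzero representations. Then N^0 := N_1 ⊕ ⋯ ⊕ N_n is an isotropic subspace of M^0, i.e. ⟨x, y⟩ = 0 for all x, y ∈ N^0. -/

import Mathlib

open Module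

/-- A representation of the equioriented type `A_n` quiver over `ℂ`: finite-dimensional
complex vector spaces `V i` (only the indices `1 ≤ i ≤ n` carry content, the spaces at
index `0` and at indices `> n` are required to be trivial) together with linear maps
`f i : V i → V (i+1)`. -/
structure ARep (n : ℕ) where
  V : ℕ → Type
  [instAddCommGroup : ∀ i, AddCommGroup (V i)]
  [instModule : ∀ i, Module ℂ (V i)]
  [instFiniteDimensional : ∀ i, FiniteDimensional ℂ (V i)]
  f : ∀ i, V i →ₗ[ℂ] V (i + 1)
  triv : ∀ i, i = 0 ∨ n < i → Subsingleton (V i)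

attribute [instance] ARep.instAddCommGroup ARep.instModule ARep.instFiniteDimensional

namespace ARep

/-- The composite map `f_{i,i+k} : M_i → M_{i+k}` (the identity for `k = 0`). -/
noncomputable def F {n : ℕ} (M : ARep n) (i : ℕ) : (k : ℕ) → (M.V i →ₗ[ℂ] M.V (i + k))
  | 0 => LinearMap.id
  | (k + 1) => (M.f (i + k)).comp (M.F i k)

/-- The rank sequence `r^M_{i,j} = rank f_{i,j}`.  (For `i = 0` the source space is
trivial and for `j = n+1` the target space is trivial, so the conventions
`r^M_{0,·} = 0 = r^M_{·,n+1}` hold automatically.) -/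
noncomputable def r {n : ℕ} (M : ARep n) (i j : ℕ) : ℕ :=
  Module.finrank ℂ (LinearMap.range (M.F i (j - i)))

end ARep

/-- A morphism of representations of the equioriented type `A_n` quiver. -/
structure ARepHom {n : ℕ} (M N : ARep n) where
  φ : ∀ i, M.V i →ₗ[ℂ] N.V i
  comm : ∀ i, (φ (i + 1)).comp (M.f i) = (N.f i).comp (φ i)

/-- Two representations are isomorphic if there is a morphism all of whose components
are bijective. -/
def ARepIso {n : ℕ} (M N : ARep n) : Prop :=
  ∃ h : ARepHom M N, ∀ i, Function.Bijective (h.φ i)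

/-- The condition for the interval representation `U_{i,j}` to have a nonzero space at
vertex `k`. -/
def Ucond (n i j k : ℕ) : Prop := 1 ≤ k ∧ k ≤ n ∧ i ≤ k ∧ k ≤ j

instance (n i j k : ℕ) : Decidable (Ucond n i j k) := by unfold Ucond; infer_instance

/-- The space of `U_{i,j}` at vertex `k`, realized as a submodule of `ℂ`. -/
noncomputable def Uspace (n i j k : ℕ) : Submodule ℂ ℂ := if Ucond n i j k then ⊤ else ⊥

/-- The indecomposable interval representation `U_{i,j}` (for `1 ≤ i ≤ j ≤ n`):
one-dimensional at the vertices `i ≤ k ≤ j`, zero elsewhere, with identity structure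
maps inside the interval. -/
noncomputable def Urep (n i j : ℕ) : ARep n where
  V k := ↥(Uspace n i j k)
  f k := LinearMap.restrict
    (if Ucond n i j k ∧ Ucond n i j (k + 1) then (LinearMap.id : ℂ →ₗ[ℂ] ℂ) else 0)
    (p := Uspace n i j k) (q := Uspace n i j (k + 1))
    (by
      intro x hx
      by_cases h : Ucond n i j k ∧ Ucond n i j (k + 1)
      · rw [if_pos h]
        simp [Uspace, if_pos h.2]
      · rw [if_neg h]
        simp)
  triv k hk := by
    have hbot : Uspace n i j k = ⊥ := by
      simp only [Uspace]; rw [if_neg]; unfold Ucond; omega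
    have h0 := (Submodule.eq_bot_iff _).mp hbot
    exact ⟨fun a b => Subtype.ext ((h0 a.1 a.2).trans (h0 b.1 b.2).symm)⟩

/-- The componentwise direct sum of two representations. -/
noncomputable def ARep.dsum {n : ℕ} (M N : ARep n) : ARep n where
  V i := M.V i × N.V i
  f i := (M.f i).prodMap (N.f i)
  triv i hi := by
    haveI := M.triv i hi
    haveI := N.triv i hi
    exact ⟨fun a b => Prod.ext (Subsingleton.elim _ _) (Subsingleton.elim _ _)⟩

/-- A representation is nonzero if some vector space is nonzero. -/
def ARep.Nonzero {n : ℕ} (M : ARep n) : Prop := ∃ i, ∃ v : M.V i, v ≠ 0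

/-- The index set of segments `1 ≤ i ≤ j ≤ n`. -/
def SegIdx (n : ℕ) : Type :=
  {p : Fin (n + 1) × Fin (n + 1) // 1 ≤ p.1.1 ∧ p.1.1 ≤ p.2.1}

instance (n : ℕ) : Fintype (SegIdx n) := by unfold SegIdx; infer_instance

/-- The direct sum `⊕_{1 ≤ i ≤ j ≤ n} U_{i,j}^{⊕ m i j}`, taken componentwise. -/
noncomputable def sumU (n : ℕ) (m : ℕ → ℕ → ℕ) : ARep n where
  V k := ∀ p : SegIdx n, Fin (m p.1.1.1 p.1.2.1) → (Urep n p.1.1.1 p.1.2.1).V k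
  f k := LinearMap.pi fun p =>
    (((Urep n p.1.1.1 p.1.2.1).f k).compLeft (Fin (m p.1.1.1 p.1.2.1))).comp
      (LinearMap.proj p)
  triv k hk := by
    haveI := fun p : SegIdx n => (Urep n p.1.1.1 p.1.2.1).triv k hk
    exact ⟨fun a b => funext fun p => Subsingleton.elim _ _⟩

/-- The space of morphisms `Hom(M,N)` realized as a subspace of the product of the
spaces of componentwise linear maps. -/
noncomputable def HomSubspace {n : ℕ} (M N : ARep n) :
    Submodule ℂ (∀ k, M.V k →ₗ[ℂ] N.V k) where
  carrier := {φ | ∀ k, (φ (k + 1)).comp (M.f k) = (N.f k).comp (φ k)}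
  add_mem' := by
    intro a b ha hb k
    simp only [Pi.add_apply, LinearMap.add_comp, LinearMap.comp_add, ha k, hb k]
  zero_mem' := by
    intro k
    simp
  smul_mem' := by
    intro c a ha k
    simp only [Pi.smul_apply, LinearMap.smul_comp, LinearMap.comp_smul, ha k]

/-- The quotient of a representation by a family of subspaces stable under the
structure maps. -/
noncomputable def ARep.quot {n : ℕ} (M : ARep n) (S : ∀ k, Submodule ℂ (M.V k))
    (h : ∀ k, S k ≤ (S (k + 1)).comap (M.f k)) : ARep n where
  V k := M.V k ⧸ S k
  f k := Submodule.mapQ (S k) (S (k + 1)) (M.f k) (h k)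
  triv k hk := by
    haveI := M.triv k hk
    refine ⟨fun a b => ?_⟩
    obtain ⟨x, rfl⟩ := Submodule.Quotient.mk_surjective _ a
    obtain ⟨y, rfl⟩ := Submodule.Quotient.mk_surjective _ b
    exact congrArg _ (Subsingleton.elim x y)

/-- The quotient `M / ι(L)` of `M` by the image of a morphism `ι : L → M`. -/
noncomputable def quotByHom {n : ℕ} {L M : ARep n} (ι : ARepHom L M) : ARep n :=
  M.quot (fun k => LinearMap.range (ι.φ k)) (by
    intro k x hx
    obtain ⟨y, rfl⟩ := hx
    rw [Submodule.mem_comap]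
    exact ⟨L.f k y, LinearMap.congr_fun (ι.comm k) y⟩)

/-- The subrepresentation of `M` given by a family of subspaces stable under the
structure maps. -/
noncomputable def ARep.sub {n : ℕ} (M : ARep n) (N : ∀ i, Submodule ℂ (M.V i))
    (h : ∀ i, ∀ x ∈ N i, M.f i x ∈ N (i + 1)) : ARep n where
  V i := ↥(N i)
  f i := (M.f i).restrict (h i)
  triv i hi := by
    haveI := M.triv i hi
    exact ⟨fun a b => Subtype.ext (Subsingleton.elim _ _)⟩

/-- The subquotient representation `P/S` of `M`, for families of subspaces
`S k ≤ P k` both stable under the structure maps. -/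
noncomputable def ARep.subquot {n : ℕ} (M : ARep n) (P S : ∀ k, Submodule ℂ (M.V k))
    (hSP : ∀ k, S k ≤ P k)
    (hP : ∀ k, ∀ x ∈ P k, M.f k x ∈ P (k + 1))
    (hS : ∀ k, ∀ x ∈ S k, M.f k x ∈ S (k + 1)) : ARep n where
  V k := ↥(P k) ⧸ (S k).comap (P k).subtype
  f k := Submodule.mapQ _ _ ((M.f k).restrict (hP k)) (by
    intro x hx
    rw [Submodule.mem_comap] at hx ⊢
    exact hS k x.1 hx)
  triv k hk := by
    haveI := M.triv k hk
    haveI : Subsingleton (↥(P k)) := ⟨fun a b => Subtype.ext (Subsingleton.elim _ _)⟩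
    refine ⟨fun a b => ?_⟩
    obtain ⟨x, rfl⟩ := Submodule.Quotient.mk_surjective _ a
    obtain ⟨y, rfl⟩ := Submodule.Quotient.mk_surjective _ b
    exact congrArg _ (Subsingleton.elim x y)

/-- A `σ`-compatible `ε`-form on the underlying graded vector space of `M` making `M`
an `ε`-representation: a nondegenerate bilinear form `B` on `M^0 = ⊕_i M_i` with
`B v w = ε B w v`, with `B (M_i) (M_j) = 0` unless `i + j = n + 1` (i.e. `j = σ(i)`),
and anti-compatible with the structure maps. -/
structure EpsForm (n : ℕ) (M : ARep n) (ε : ℂ) where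
  B : (∀ i, M.V i) →ₗ[ℂ] (∀ i, M.V i) →ₗ[ℂ] ℂ
  nondeg : ∀ v, (∀ w, B v w = 0) → v = 0
  eps_symm : ∀ v w, B v w = ε * B w v
  graded : ∀ (i j : ℕ) (v : M.V i) (w : M.V j), i + j ≠ n + 1 →
    B (Pi.single i v) (Pi.single j w) = 0
  compat : ∀ i, 1 ≤ i → i + 1 ≤ n → ∀ (v : M.V i) (w : M.V (n - i)),
    B (Pi.single (i + 1) (M.f i v)) (Pi.single (n - i) w)
      + B (Pi.single i v) (Pi.single (n - i + 1) (M.f (n - i) w)) = 0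

/-- The orthogonal complement, at vertex `p`, of the image of a morphism `ι : L → M`
with respect to the form `E`. -/
noncomputable def perpAt {n : ℕ} {L M : ARep n} {ε : ℂ} (E : EpsForm n M ε)
    (ι : ARepHom L M) (p : ℕ) : Submodule ℂ (M.V p) where
  carrier := {y | ∀ (q : ℕ) (x : M.V q), x ∈ LinearMap.range (ι.φ q) →
    E.B (Pi.single p y) (Pi.single q x) = 0}
  add_mem' := by
    intro a b ha hb q x hx
    rw [Pi.single_add, map_add, LinearMap.add_apply, ha q x hx, hb q x hx, add_zero]
  zero_mem' := by
    intro q x hx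
    rw [Pi.single_zero, map_zero, LinearMap.zero_apply]
  smul_mem' := by
    intro c a ha q x hx
    rw [Pi.single_smul, map_smul, LinearMap.smul_apply, ha q x hx, smul_zero]



/-! ### Auxiliary development -/

section Aux

open Submodule

variable {n : ℕ} (R : ARep n)

/-- The vector `v : R.V a` transported to slot `k` (zero if `k ≠ a`). -/
noncomputable def vAt (a : ℕ) (v : R.V a) (k : ℕ) : R.V k :=
  if h : a = k then h ▸ v else 0

lemma vAt_self (a : ℕ) (v : R.V a) : vAt R a v a = v := dif_pos rfl

lemma vAt_ne (a : ℕ) (v : R.V a) (k : ℕ) (h : a ≠ k) : vAt R a v k = 0 := dif_neg h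

/-- The chain of images of `v` along the structure maps. -/
noncomputable def wvec (a : ℕ) (v : R.V a) : (k : ℕ) → R.V k
  | 0 => vAt R a v 0
  | (k+1) => R.f k (wvec a v k) + vAt R a v (k+1)

lemma wvec_lt (a : ℕ) (v : R.V a) : ∀ k, k < a → wvec R a v k = 0 := by
  intro k
  induction k with
  | zero => intro h; show vAt R a v 0 = 0; exact vAt_ne R a v 0 (by omega)
  | succ k ih =>
      intro h
      show R.f k (wvec R a v k) + vAt R a v (k+1) = 0
      rw [ih (by omega), map_zero, zero_add, vAt_ne R a v (k+1) (by omega)]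

lemma wvec_succ (a : ℕ) (v : R.V a) (k : ℕ) (h : a ≠ k + 1) :
    wvec R a v (k+1) = R.f k (wvec R a v k) := by
  show R.f k (wvec R a v k) + vAt R a v (k+1) = _
  rw [vAt_ne R a v (k+1) h, add_zero]

lemma wvec_self (a : ℕ) (v : R.V a) : wvec R a v a = v := by
  cases a with
  | zero => exact vAt_self R 0 v
  | succ k =>
      show R.f k (wvec R (k+1) v k) + vAt R (k+1) v (k+1) = v
      rw [wvec_lt R (k+1) v k (by omega), map_zero, zero_add, vAt_self]

/-- The candidate uniserial summand. -/
noncomputable def Pf (a : ℕ) (v : R.V a) (k : ℕ) : Submodule ℂ (R.V k) :=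
  Submodule.span ℂ {wvec R a v k}

lemma Pf_stab (a : ℕ) (v : R.V a) :
    ∀ k, ∀ z ∈ Pf R a v k, R.f k z ∈ Pf R a v (k+1) := by
  intro k z hz
  obtain ⟨c, hc⟩ := Submodule.mem_span_singleton.mp hz
  by_cases h : a = k + 1
  · have h0 : wvec R a v k = 0 := wvec_lt R a v k (by omega)
    rw [← hc, h0, smul_zero, map_zero]
    exact zero_mem _
  · rw [← hc, map_smul]
    apply Submodule.smul_mem
    rw [Pf, ← wvec_succ R a v k h]
    exact Submodule.mem_span_singleton_self _

/-- A complement of `W ⊓ P` inside `W`. -/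
noncomputable def Qc {α : Type} [AddCommGroup α] [Module ℂ α] (W Pk : Submodule ℂ α) :
    Submodule ℂ α :=
  (Classical.choose (Submodule.exists_isCompl ((W ⊓ Pk).comap W.subtype))).map W.subtype

lemma Qc_le {α : Type} [AddCommGroup α] [Module ℂ α] (W Pk : Submodule ℂ α) :
    Qc W Pk ≤ W := Submodule.map_subtype_le _ _

lemma inf_eq_map_comap {α : Type} [AddCommGroup α] [Module ℂ α] (W Pk : Submodule ℂ α) :
    Submodule.map W.subtype ((W ⊓ Pk).comap W.subtype) = W ⊓ Pk := by
  rw [Submodule.map_comap_subtype, ← inf_assoc, inf_idem]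

lemma Qc_sup {α : Type} [AddCommGroup α] [Module ℂ α] (W Pk : Submodule ℂ α) :
    Qc W Pk ⊔ (W ⊓ Pk) = W := by
  have hc := Classical.choose_spec (Submodule.exists_isCompl ((W ⊓ Pk).comap W.subtype))
  have h2 : Qc W Pk ⊔ Submodule.map W.subtype ((W ⊓ Pk).comap W.subtype) = W := by
    rw [Qc, ← Submodule.map_sup, codisjoint_iff.mp hc.symm.codisjoint,
      Submodule.map_subtype_top]
  rw [inf_eq_map_comap] at h2
  exact h2

lemma Qc_inf {α : Type} [AddCommGroup α] [Module ℂ α] (W Pk : Submodule ℂ α) :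
    Qc W Pk ⊓ Pk = ⊥ := by
  have hc := Classical.choose_spec (Submodule.exists_isCompl ((W ⊓ Pk).comap W.subtype))
  have h1 : Qc W Pk ⊓ Pk = Qc W Pk ⊓ (W ⊓ Pk) := by
    rw [← inf_assoc, inf_eq_left.mpr (Qc_le W Pk)]
  have h2 : Qc W Pk ⊓ Submodule.map W.subtype ((W ⊓ Pk).comap W.subtype) = ⊥ := by
    rw [Qc, ← Submodule.map_inf _ (Submodule.injective_subtype W),
      disjoint_iff.mp hc.symm.disjoint, Submodule.map_bot]
  rw [inf_eq_map_comap] at h2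
  rw [h1]
  exact h2

/-- The invariant complement family, built by downward recursion. -/
noncomputable def Qf (a : ℕ) (v : R.V a) (k : ℕ) : Submodule ℂ (R.V k) :=
  if _h : n < k then ⊤
  else Qc ((Qf a v (k+1)).comap (R.f k)) (Pf R a v k)
termination_by n + 1 - k
decreasing_by omega

lemma Qf_top (a : ℕ) (v : R.V a) (k : ℕ) (h : n < k) : Qf R a v k = ⊤ := by
  rw [Qf]; exact dif_pos h

lemma Qf_eq (a : ℕ) (v : R.V a) (k : ℕ) (h : ¬ n < k) :
    Qf R a v k = Qc ((Qf R a v (k+1)).comap (R.f k)) (Pf R a v k) := by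
  rw [Qf]; exact dif_neg h

lemma Qf_stab (a : ℕ) (v : R.V a) :
    ∀ k, ∀ z ∈ Qf R a v k, R.f k z ∈ Qf R a v (k+1) := by
  intro k z hz
  by_cases h : n < k
  · rw [Qf_top R a v (k+1) (by omega)]
    trivial
  · rw [Qf_eq R a v k h] at hz
    exact Submodule.mem_comap.mp (Qc_le _ _ hz)

theorem isCompl_Qf (a : ℕ) (v : R.V a) (htriv : ∀ k, k < a → ∀ x : R.V k, x = 0)
    (k : ℕ) : IsCompl (Pf R a v k) (Qf R a v k) := by
  by_cases h : n < k
  · rw [Qf_top R a v k h]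
    have hP : Pf R a v k = ⊥ := by
      haveI := R.triv k (Or.inr h)
      exact (Submodule.eq_bot_iff _).mpr fun x _ => Subsingleton.elim x 0
    rw [hP]
    exact isCompl_bot_top
  · have ih := isCompl_Qf a v htriv (k+1)
    rw [Qf_eq R a v k h]
    set W := (Qf R a v (k+1)).comap (R.f k) with hW
    have h2 : W ⊔ Pf R a v k = ⊤ := by
      rw [eq_top_iff]
      rintro x -
      by_cases hka : k < a
      · rw [htriv k hka x]
        exact Submodule.zero_mem _
      · have hx : R.f k x ∈ Pf R a v (k+1) ⊔ Qf R a v (k+1) := by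
          rw [codisjoint_iff.mp ih.codisjoint]
          trivial
        obtain ⟨p, hp, q, hq, hpq⟩ := Submodule.mem_sup.mp hx
        obtain ⟨c, hc⟩ := Submodule.mem_span_singleton.mp hp
        have hw1 : wvec R a v (k+1) = R.f k (wvec R a v k) :=
          wvec_succ R a v k (by omega)
        have hxW : x - c • wvec R a v k ∈ W := by
          rw [hW, Submodule.mem_comap, map_sub, map_smul, ← hw1, hc, ← hpq]
          simpa using hq
        have hxs : x = (x - c • wvec R a v k) + c • wvec R a v k := by abel
        rw [hxs]
        exact Submodule.add_mem_sup hxW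
          (Submodule.smul_mem _ _ (Submodule.mem_span_singleton_self _))
    constructor
    · exact (disjoint_iff.mpr (Qc_inf W (Pf R a v k))).symm
    · rw [codisjoint_iff]
      have h1 : Qc W (Pf R a v k) ⊔ (W ⊓ Pf R a v k) = W := Qc_sup _ _
      have h3 : W ≤ Pf R a v k ⊔ Qc W (Pf R a v k) :=
        h1.symm.trans_le (sup_le le_sup_right (inf_le_right.trans le_sup_left))
      rw [eq_top_iff, ← h2]
      exact sup_le h3 le_sup_left
termination_by n + 1 - k
decreasing_by omega

/-- Structure of an indecomposable representation: minimal support `a`, all spaces of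
dimension at most one, and all structure maps surjective except into slot `a`. -/
theorem structure_facts (hne : R.Nonzero)
    (hind : ¬ ∃ A B : ARep n, A.Nonzero ∧ B.Nonzero ∧ ARepIso R (A.dsum B)) :
    ∃ a : ℕ, (∀ k, k < a → ∀ x : R.V k, x = 0) ∧
      (∀ k, Module.finrank ℂ (R.V k) ≤ 1) ∧
      (∀ k, k + 1 ≠ a → Function.Surjective (R.f k)) := by
  classical
  have hne' : ∃ i, ∃ x : R.V i, x ≠ 0 := hne
  set a := Nat.find hne' with ha
  obtain ⟨v, hv⟩ : ∃ x : R.V a, x ≠ 0 := Nat.find_spec hne'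
  have htriv : ∀ k, k < a → ∀ x : R.V k, x = 0 := by
    intro k hk x
    by_contra hx
    exact Nat.find_min hne' hk ⟨x, hx⟩
  have hcompl := isCompl_Qf R a v htriv
  have hQ0 : ∀ j, ∀ x ∈ Qf R a v j, x = (0 : R.V j) := by
    by_contra hcon
    push_neg at hcon
    obtain ⟨j, xq, hxQ, hx0⟩ := hcon
    apply hind
    refine ⟨R.sub (Pf R a v) (Pf_stab R a v), R.sub (Qf R a v) (Qf_stab R a v), ?_, ?_, ?_⟩
    · refine ⟨a, ⟨v, ?_⟩, ?_⟩
      · exact Submodule.mem_span_singleton.mpr ⟨1, by rw [one_smul, wvec_self]⟩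
      · exact fun h => hv (congrArg Subtype.val h)
    · exact ⟨j, ⟨xq, hxQ⟩, fun h => hx0 (congrArg Subtype.val h)⟩
    · set A := R.sub (Pf R a v) (Pf_stab R a v) with hA
      set B := R.sub (Qf R a v) (Qf_stab R a v) with hB
      let e : ∀ k, ((Pf R a v k) × (Qf R a v k)) ≃ₗ[ℂ] R.V k := fun k =>
        Submodule.prodEquivOfIsCompl _ _ (hcompl k)
      have hfwd : ∀ k (z : (Pf R a v k) × (Qf R a v k)),
          R.f k (e k z) = e (k+1) (((A.f k).prodMap (B.f k)) z) := by
        intro k z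
        exact map_add (R.f k) z.1.1 z.2.1
      refine ⟨⟨fun k => ((e k).symm.toLinearMap), fun k => ?_⟩, fun k => ?_⟩
      · apply LinearMap.ext
        intro z
        obtain ⟨u, rfl⟩ := (e k).surjective z
        show (e (k+1)).symm (R.f k (e k u)) = ((A.f k).prodMap (B.f k)) ((e k).symm (e k u))
        have h1 := (e (k+1)).symm_apply_apply (((A.f k).prodMap (B.f k)) u)
        have h2 := (e k).symm_apply_apply u
        rw [hfwd k u]
        exact h1.trans (congrArg _ h2.symm)
      · exact (e k).symm.bijective
  have hPtop : ∀ k, Pf R a v k = ⊤ := by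
    intro k
    have h1 : Qf R a v k = ⊥ := (Submodule.eq_bot_iff _).mpr (hQ0 k)
    have h2 := codisjoint_iff.mp (hcompl k).codisjoint
    rw [h1, sup_bot_eq] at h2
    exact h2
  refine ⟨a, htriv, ?_, ?_⟩
  · intro k
    rw [← finrank_top ℂ (R.V k), ← hPtop k, Pf]
    by_cases hw : wvec R a v k = 0
    · rw [hw, Submodule.span_zero_singleton, finrank_bot]
      omega
    · rw [finrank_span_singleton hw]
  · intro k hk
    rw [← LinearMap.range_eq_top]
    have h1 : LinearMap.range (R.f k) = Submodule.map (R.f k) (Pf R a v k) := by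
      rw [hPtop k, Submodule.map_top]
    rw [h1, Pf, Submodule.map_span, Set.image_singleton, ← wvec_succ R a v k (fun h => hk h.symm)]
    rw [← Pf, hPtop]

/-- A vector space of dimension at most one is spanned by any nonzero vector. -/
lemma exists_smul_eq' {V : Type} [AddCommGroup V] [Module ℂ V] [FiniteDimensional ℂ V]
    (h : Module.finrank ℂ V ≤ 1) {v : V} (hv : v ≠ 0) (w : V) : ∃ c : ℂ, w = c • v := by
  have h1 : Module.finrank ℂ (ℂ ∙ v) = 1 := finrank_span_singleton hv
  have h2 : (ℂ ∙ v) = ⊤ := by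
    apply Submodule.eq_top_of_finrank_eq
    have h3 := Submodule.finrank_le (ℂ ∙ v)
    omega
  have h4 : w ∈ (ℂ ∙ v) := h2 ▸ Submodule.mem_top
  obtain ⟨c, hc⟩ := Submodule.mem_span_singleton.mp h4
  exact ⟨c, hc.symm⟩

end Aux

section Key

/-- The key isotropy computation for a single pair of matched slots. -/
theorem key_isotropy {n : ℕ} {ε : ℂ}
    (hsplit : (Odd n ∧ ε = -1) ∨ (Even n ∧ ε = 1))
    (M : ARep n) (E : EpsForm n M ε)
    (N : ∀ i, Submodule ℂ (M.V i)) (hsub : ∀ i, ∀ x ∈ N i, M.f i x ∈ N (i + 1))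
    (hdim : ∀ k, Module.finrank ℂ (N k) ≤ 1)
    (a : ℕ) (htriv : ∀ k, k < a → ∀ w ∈ N k, w = (0 : M.V k))
    (hsurj : ∀ k, k + 1 ≠ a → ∀ w ∈ N (k+1), ∃ w', w' ∈ N k ∧ M.f k w' = w)
    (d p q : ℕ) (hpq : p + q = n + 1) (hd : q = p + d)
    (v : M.V p) (hvN : v ∈ N p) (w : M.V q) (hwN : w ∈ N q) :
    E.B (Pi.single p v) (Pi.single q w) = 0 := by
  by_cases hqn : n < q
  · have : w = 0 := by
      haveI := M.triv q (Or.inr hqn)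
      exact Subsingleton.elim w 0
    rw [this, Pi.single_zero, map_zero]
  · -- q ≤ n, hence p ≥ 1
    have hp1 : 1 ≤ p := by omega
    rcases d with _ | d1
    ·
      have hq : q = p := by omega
      subst hq
      have hε : ε = -1 := by
        rcases hsplit with ⟨_, hε⟩ | ⟨⟨r, hr⟩, _⟩
        · exact hε
        · omega
      by_cases hv0 : v = 0
      · rw [hv0, Pi.single_zero, map_zero, LinearMap.zero_apply]
      · obtain ⟨c, hc⟩ := exists_smul_eq' (hdim q)
          (show (⟨v, hvN⟩ : N q) ≠ 0 by simpa [Submodule.mk_eq_zero] using hv0)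
          (⟨w, hwN⟩ : N q)
        have hcw : w = c • v := congrArg Subtype.val hc
        have hs := E.eps_symm (Pi.single q v) (Pi.single q v)
        have hz : E.B (Pi.single q v) (Pi.single q v) = 0 := by
          linear_combination hs / 2 + (E.B (Pi.single q v)) (Pi.single q v) / 2 * hε
        rw [hcw]
        rw [Pi.single_smul]
        rw [map_smul]
        rw [hz]
        rw [smul_zero]
    rcases d1 with _ | d'
    · have hd' : q = p + 1 := by omega
      subst hd'
      have hε : ε = 1 := by
        rcases hsplit with ⟨⟨r, hr⟩, _⟩ | ⟨_, hε⟩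
        · omega
        · exact hε
      by_cases hqa : p + 1 = a
      · rw [htriv p (by omega) v hvN, Pi.single_zero, map_zero, LinearMap.zero_apply]
      · obtain ⟨w', hw'N, hw'⟩ := hsurj p hqa w hwN
        by_cases hw'0 : w' = 0
        · rw [← hw', hw'0, map_zero, Pi.single_zero, map_zero]
        · obtain ⟨c, hc⟩ := exists_smul_eq' (hdim p)
            (show (⟨w', hw'N⟩ : N p) ≠ 0 by simpa [Submodule.mk_eq_zero] using hw'0)
            (⟨v, hvN⟩ : N p)
          have hcv : v = c • w' := congrArg Subtype.val hc
          have hcompat := E.compat p (by omega) (by omega)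
          have hnp : n - p = p := by omega
          rw [hnp] at hcompat
          have h1 := hcompat w' w'
          have hsym := E.eps_symm (Pi.single (p+1) (M.f p w')) (Pi.single p w')
          have hS : E.B (Pi.single p w') (Pi.single (p+1) (M.f p w')) = 0 := by
            linear_combination h1 / 2 - hsym / 2
              - (E.B (Pi.single p w')) (Pi.single (p+1) (M.f p w')) / 2 * hε
          rw [← hw']
          rw [hcv]
          rw [Pi.single_smul]
          rw [map_smul]
          rw [LinearMap.smul_apply]
          rw [hS]
          rw [smul_zero]
    · obtain ⟨k, rfl⟩ : ∃ k, q = k + 1 := ⟨q - 1, by omega⟩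
      by_cases hqa : k + 1 = a
      · rw [htriv p (by omega) v hvN, Pi.single_zero, map_zero, LinearMap.zero_apply]
      · obtain ⟨w', hw'N, hw'⟩ := hsurj k hqa w hwN
        have hcompat := E.compat p (by omega) (by omega)
        have hnp : n - p = k := by omega
        rw [hnp] at hcompat
        have h1 := hcompat v w'
        have h2 : E.B (Pi.single (p+1) (M.f p v)) (Pi.single k w') = 0 :=
          key_isotropy hsplit M E N hsub hdim a htriv hsurj d' (p+1) k
            (by omega) (by omega) (M.f p v) (hsub p v hvN) w' hw'N
        rw [← hw']
        linear_combination h1 - h2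
termination_by d
decreasing_by omega

end Key

theorem split_type_indecomposable_sub_isotropic (n : ℕ) (ε : ℂ)
    (hsplit : (Odd n ∧ ε = -1) ∨ (Even n ∧ ε = 1))
    (M : ARep n) (E : EpsForm n M ε)
    (N : ∀ i, Submodule ℂ (M.V i)) (hsub : ∀ i, ∀ x ∈ N i, M.f i x ∈ N (i + 1))
    (hne : (M.sub N hsub).Nonzero)
    (hind : ¬ ∃ A B : ARep n, A.Nonzero ∧ B.Nonzero ∧ ARepIso (M.sub N hsub) (A.dsum B)) :
    ∀ x y : (∀ i, M.V i), (∀ i, x i ∈ N i) → (∀ i, y i ∈ N i) → E.B x y = 0 := by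
  classical
  intro x y hx hy
  obtain ⟨a, htrivR, hdimR, hsurjR⟩ := structure_facts (M.sub N hsub) hne hind
  have htriv : ∀ k, k < a → ∀ w ∈ N k, w = (0 : M.V k) := by
    intro k hk w hw
    have := htrivR k hk ⟨w, hw⟩
    exact congrArg Subtype.val this
  have hdim : ∀ k, Module.finrank ℂ (N k) ≤ 1 := hdimR
  have hsurj : ∀ k, k + 1 ≠ a → ∀ w ∈ N (k+1), ∃ w', w' ∈ N k ∧ M.f k w' = w := by
    intro k hk w hw
    obtain ⟨z, hz⟩ := hsurjR k hk ⟨w, hw⟩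
    exact ⟨z.1, z.2, congrArg Subtype.val hz⟩
  have hzero : ∀ (z : ∀ i, M.V i), (∀ j, n < j → z j = 0) →
      z = ∑ i ∈ Finset.range (n+1), Pi.single i (z i) := by
    intro z hz
    funext j
    rw [Finset.sum_apply]
    by_cases hj : j ∈ Finset.range (n+1)
    · rw [Finset.sum_eq_single_of_mem j hj
        (fun i _ hij => Pi.single_eq_of_ne (Ne.symm hij) _), Pi.single_eq_same]
    · rw [Finset.sum_eq_zero
        (fun i hi => Pi.single_eq_of_ne (fun hji : j = i => hj (hji ▸ hi)) _)]
      exact hz j (by simpa using hj)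
  have hx0 : ∀ j, n < j → x j = 0 := by
    intro j hj
    haveI := M.triv j (Or.inr hj)
    exact Subsingleton.elim _ _
  have hy0 : ∀ j, n < j → y j = 0 := by
    intro j hj
    haveI := M.triv j (Or.inr hj)
    exact Subsingleton.elim _ _
  have hterm : ∀ i j, E.B (Pi.single i (x i)) (Pi.single j (y j)) = 0 := by
    intro i j
    by_cases hij : i + j = n + 1
    · rcases le_or_gt i j with h | h
      · exact key_isotropy hsplit M E N hsub hdim a htriv hsurj (j - i) i j hij
          (by omega) (x i) (hx i) (y j) (hy j)
      · have hz := key_isotropy hsplit M E N hsub hdim a htriv hsurj (i - j) j i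
          (by omega) (by omega) (y j) (hy j) (x i) (hx i)
        rw [E.eps_symm, hz, mul_zero]
    · exact E.graded i j (x i) (y j) hij
  rw [hzero x hx0, hzero y hy0]
  simp only [map_sum, LinearMap.sum_apply]
  apply Finset.sum_eq_zero
  intro u _
  apply Finset.sum_eq_zero
  intro t _
  exact hterm _ _
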